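/- Let (ν_n)_{n≥1} and ν be probability densities in L¹(μ) on a measure space (E, μ), and suppose ∫ g ν_n dμ → ∫ g ν dμ for every g ∈ L^∞(μ) (weak convergence in L¹). Then the family {ν_n : n ≥ 1} is uniformly integrable: for every ε > 0 there exists δ > 0 such that for all measurable A with μ(A) < δ, sup_n ∫_A ν_n dμ < ε. -/

import Mathlib

open MeasureTheory Filter
open scoped ENNReal NNReal

lemma absCont_single {E : Type*} [MeasurableSpace E] (μ : Measure E) (f : E → ℝ)
    (hf : Integrable f μ) (hnn : ∀ x, 0 ≤ f x) {ε : ℝ} (hε : 0 < ε) :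
    ∃ δ : ℝ, 0 < δ ∧ ∀ s : Set E, MeasurableSet s → μ s < ENNReal.ofReal δ →
      ∫ x in s, f x ∂μ < ε := by
  have hfin : ∫⁻ x, ENNReal.ofReal (f x) ∂μ ≠ ⊤ := by
    have := hf.hasFiniteIntegral
    rw [HasFiniteIntegral] at this
    have heq : ∀ x, (‖f x‖₊ : ℝ≥0∞) = ENNReal.ofReal (f x) := fun x => by
      rw [show (‖f x‖₊ : ℝ≥0∞) = ENNReal.ofReal ‖f x‖ from (ofReal_norm (f x)).symm, Real.norm_of_nonneg (hnn x)]
    rw [show (fun x => ENNReal.ofReal (f x)) = fun x => (‖f x‖₊ : ℝ≥0∞) from funext fun x => (heq x).symm]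
    exact this.ne
  obtain ⟨δ, hδ0, hδ⟩ := exists_pos_setLIntegral_lt_of_measure_lt (μ := μ) hfin
    (ε := ENNReal.ofReal ε) (by simp [hε, hε.le])
  refine ⟨(min δ 1).toReal, ?_, fun s hs hμs => ?_⟩
  · apply ENNReal.toReal_pos
    · exact (lt_min hδ0 zero_lt_one).ne'
    · exact ne_top_of_le_ne_top (by simp) (min_le_right _ _)
  · have h1 : μ s < δ := by
      refine lt_of_lt_of_le hμs ?_
      rw [ENNReal.ofReal_toReal (ne_top_of_le_ne_top (by simp) (min_le_right δ 1))]
      exact min_le_left _ _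
    have h2 := hδ s h1
    have h3 : ∫ x in s, f x ∂μ = (∫⁻ x in s, ENNReal.ofReal (f x) ∂μ).toReal :=
      integral_eq_lintegral_of_nonneg_ae (Filter.Eventually.of_forall hnn)
        hf.aestronglyMeasurable.restrict
    rw [h3]
    exact ENNReal.toReal_lt_of_lt_ofReal h2

lemma absCont_finite {E : Type*} [MeasurableSpace E] (μ : Measure E) (ν : ℕ → E → ℝ)
    (hint : ∀ n, Integrable (ν n) μ) (hnn : ∀ n x, 0 ≤ ν n x) {ε : ℝ} (hε : 0 < ε) :
    ∀ N : ℕ, ∃ δ : ℝ, 0 < δ ∧ ∀ s : Set E, MeasurableSet s → μ s < ENNReal.ofReal δ →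
      ∀ n < N, ∫ x in s, ν n x ∂μ < ε := by
  intro N
  induction N with
  | zero => exact ⟨1, one_pos, fun s _ _ n hn => absurd hn (Nat.not_lt_zero n)⟩
  | succ N ih =>
    obtain ⟨δ₁, hδ₁0, hδ₁⟩ := ih
    obtain ⟨δ₂, hδ₂0, hδ₂⟩ := absCont_single μ (ν N) (hint N) (hnn N) hε
    refine ⟨min δ₁ δ₂, lt_min hδ₁0 hδ₂0, fun s hs hμs n hn => ?_⟩
    rcases Nat.lt_succ_iff_lt_or_eq.mp hn with h | h
    · exact hδ₁ s hs (hμs.trans_le (ENNReal.ofReal_le_ofReal (min_le_left _ _))) n h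
    · subst h
      exact hδ₂ s hs (hμs.trans_le (ENNReal.ofReal_le_ofReal (min_le_right _ _)))


/-- Dunford–Pettis step: a sequence of probability densities converging weakly in
L¹(μ) (tested against all bounded measurable functions) is uniformly integrable. -/
theorem stmt_16 {E : Type*} [MeasurableSpace E] (μ : Measure E)
    (ν : ℕ → E → ℝ) (ν' : E → ℝ)
    (hint : ∀ n, Integrable (ν n) μ) (hint' : Integrable ν' μ)
    (hnn : ∀ n x, 0 ≤ ν n x) (hnn' : ∀ x, 0 ≤ ν' x)
    (hprob : ∀ n, ∫ x, ν n x ∂μ = 1) (hprob' : ∫ x, ν' x ∂μ = 1)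
    (hweak : ∀ g : E → ℝ, Measurable g → (∃ B, ∀ x, |g x| ≤ B) →
      Tendsto (fun n => ∫ x, g x * ν n x ∂μ) atTop (nhds (∫ x, g x * ν' x ∂μ))) :
    ∀ ε : ℝ, 0 < ε → ∃ δ : ℝ, 0 < δ ∧ ∀ A : Set E, MeasurableSet A →
      μ A < ENNReal.ofReal δ → ∀ n, ∫ x in A, ν n x ∂μ < ε := by
  intro ε hε
  by_contra hcon
  push_neg at hcon
  -- absolute continuity of ν'
  obtain ⟨δ', hδ'0, hδ'⟩ := absCont_single μ ν' hint' hnn' (half_pos hε)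
  set c : ℕ → ℝ := fun k => (δ' / 4) * (2⁻¹ : ℝ) ^ k with hc_def
  have hc_pos : ∀ k, 0 < c k := fun k => by positivity
  have hc_sum : Summable c :=
    (summable_geometric_of_lt_one (by norm_num) (by norm_num)).mul_left _
  have hc_tsum : ∑' k, c k = δ' / 2 := by
    rw [hc_def, tsum_mul_left, tsum_geometric_of_lt_one (by norm_num) (by norm_num)]
    norm_num
    ring
  -- key step: small sets with big integral and large index
  have key : ∀ m k : ℕ, ∃ (A : Set E) (n : ℕ), MeasurableSet A ∧
      μ A < ENNReal.ofReal (c k) ∧ ε ≤ ∫ x in A, ν n x ∂μ ∧ m < n := by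
    intro m k
    obtain ⟨δf, hδf0, hδf⟩ := absCont_finite μ ν hint hnn hε (m + 1)
    obtain ⟨A, hA, hAμ, n, hn⟩ := hcon (min (c k) δf) (lt_min (hc_pos k) hδf0)
    refine ⟨A, n, hA, hAμ.trans_le (ENNReal.ofReal_le_ofReal (min_le_left _ _)), hn, ?_⟩
    by_contra hle
    push_neg at hle
    exact absurd (hδf A hA (hAμ.trans_le (ENNReal.ofReal_le_ofReal (min_le_right _ _)))
      n (Nat.lt_succ_of_le hle)) (not_lt.mpr hn)
  choose Af nf h1 h2 h3 h4 using key
  -- build strictly increasing indices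
  set m_seq : ℕ → ℕ := fun k => Nat.rec 0 (fun k mk => nf mk k) k with hm_def
  have hm_succ : ∀ k, m_seq (k + 1) = nf (m_seq k) k := fun k => rfl
  set nseq : ℕ → ℕ := fun k => m_seq (k + 1) with hn_def
  set Aseq : ℕ → Set E := fun k => Af (m_seq k) k with hA_def
  have hmono : StrictMono nseq := strictMono_nat_of_lt_succ fun k => by
    simpa [hn_def, hm_succ] using h4 (m_seq (k + 1)) (k + 1)
  set A : Set E := ⋃ k, Aseq k with hAset
  have hAmeas : MeasurableSet A := MeasurableSet.iUnion fun k => h1 _ _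
  have hAμ : μ A < ENNReal.ofReal δ' := by
    calc μ A ≤ ∑' k, μ (Aseq k) := measure_iUnion_le _
    _ ≤ ∑' k, ENNReal.ofReal (c k) := ENNReal.tsum_le_tsum fun k => (h2 _ _).le
    _ = ENNReal.ofReal (∑' k, c k) :=
        (ENNReal.ofReal_tsum_of_nonneg (fun k => (hc_pos k).le) hc_sum).symm
    _ = ENNReal.ofReal (δ' / 2) := by rw [hc_tsum]
    _ < ENNReal.ofReal δ' := by
        rw [ENNReal.ofReal_lt_ofReal_iff hδ'0]
        linarith
  have hν'A : ∫ x in A, ν' x ∂μ < ε / 2 := hδ' A hAmeas hAμ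
  -- weak convergence with indicator test function
  set g : E → ℝ := A.indicator fun _ => (1 : ℝ) with hg_def
  have hg_meas : Measurable g := measurable_const.indicator hAmeas
  have hg_bd : ∃ B, ∀ x, |g x| ≤ B :=
    ⟨1, fun x => by by_cases hx : x ∈ A <;> simp [hg_def, Set.indicator_apply, hx]⟩
  have hgmul : ∀ f : E → ℝ, (fun x => g x * f x) = A.indicator f := by
    intro f
    funext x
    by_cases hx : x ∈ A <;> simp [hg_def, Set.indicator_apply, hx]
  have htend : Tendsto (fun n => ∫ x in A, ν n x ∂μ) atTop (nhds (∫ x in A, ν' x ∂μ)) := by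
    have := hweak g hg_meas hg_bd
    simpa [hgmul, integral_indicator hAmeas] using this
  have htend' : Tendsto (fun k => ∫ x in A, ν (nseq k) x ∂μ) atTop
      (nhds (∫ x in A, ν' x ∂μ)) := htend.comp hmono.tendsto_atTop
  have hlb : ∀ k, ε ≤ ∫ x in A, ν (nseq k) x ∂μ := by
    intro k
    refine (h3 (m_seq k) k).trans ?_
    refine setIntegral_mono_set (hint (nseq k)).integrableOn
      (Filter.Eventually.of_forall fun x => hnn _ x) ?_
    exact (Set.subset_iUnion Aseq k).eventuallyLE
  have : ε ≤ ∫ x in A, ν' x ∂μ := ge_of_tendsto' htend' hlb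
  linarith
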